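/- arXiv:1712.03708 — 2 statements merged into one kernel-verified Lean document; each statement's English description precedes it below -/
import Mathlib

section
/- Let L be a field of characteristic 0 such that for every positive integer n there exists a primitive n-th root of unity in L. Then the absolute Galois group of L is torsion-free: every field automorphism σ of an algebraic closure L̄ of L fixing L pointwise and satisfying σ^n = id for some integer n ≥ 1 is the identity. -/
open Polynomial in
private theorem aux_exists_eigenvector {K V : Type*} [Field K] [AddCommGroup V] [Module K V]
    {f : Module.End K V} (hf : IsIntegral K f) {μ : K}
    (h : (minpoly K f).IsRoot μ) : ∃ v : V, v ≠ 0 ∧ f v = μ • v := by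
  obtain ⟨p, hp⟩ := dvd_iff_isRoot.2 h
  have hpne : p ≠ 0 := by
    intro h0
    exact minpoly.ne_zero hf (by rw [hp, h0, mul_zero])
  have haeval : aeval f p ≠ 0 := by
    intro h0
    have h_deg := minpoly.degree_le_of_ne_zero K f hpne h0
    rw [hp, degree_mul, degree_X_sub_C, Polynomial.degree_eq_natDegree hpne] at h_deg
    norm_cast at h_deg
    omega
  obtain ⟨w, hw⟩ := DFunLike.ne_iff.mp haeval
  refine ⟨(aeval f p) w, by simpa using hw, ?_⟩
  have h2 : (aeval f (X - C μ)) ((aeval f p) w) = 0 := by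
    rw [← Module.End.mul_apply, ← map_mul, ← hp, minpoly.aeval]
    rfl
  rw [map_sub, aeval_X, aeval_C, LinearMap.sub_apply, Module.algebraMap_end_apply,
    sub_eq_zero] at h2
  exact h2

/-- **Torsion-freeness of absolute Galois groups of fields containing all roots of unity**
(Kucharczyk–Scholze). If `L` is a field of characteristic `0` containing a primitive `n`-th
root of unity for every `n ≥ 1`, then every element of finite order of the absolute Galois
group `Gal(L̄/L)` is the identity. -/
theorem absolute_galois_group_torsion_free
    (L : Type*) [Field L] [CharZero L]
    (hroots : ∀ n : ℕ, 0 < n → ∃ ζ : L, ζ ^ n = 1 ∧ ∀ m : ℕ, 0 < m → m < n → ζ ^ m ≠ 1)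
    (σ : AlgebraicClosure L ≃ₐ[L] AlgebraicClosure L)
    (n : ℕ) (hn : 1 ≤ n) (hσ : σ ^ n = 1) : σ = 1 := by
  classical
  set F := AlgebraicClosure L
  have hfin : IsOfFinOrder σ := isOfFinOrder_iff_pow_eq_one.mpr ⟨n, hn, hσ⟩
  set p := orderOf σ with hp
  have hppos : 0 < p := hfin.orderOf_pos
  -- it suffices to rule out `1 < p`
  rcases Nat.lt_or_ge 1 p with hp1 | hp1
  swap
  · have : p = 1 := le_antisymm hp1 hppos
    exact orderOf_eq_one_iff.mp this
  exfalso
  -- a primitive `p`-th root of unity in `L`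
  obtain ⟨ζ, hζ1, hζ2⟩ := hroots p hppos
  have hζne : ζ ≠ 1 := by
    intro h
    exact hζ2 1 one_pos hp1 (by rw [h, one_pow])
  -- `ζ` maps to a root of the minimal polynomial `X ^ p - 1` of `σ` as `L`-linear map
  have hmin : minpoly L σ.toLinearMap = Polynomial.X ^ p - Polynomial.C 1 :=
    minpoly_algEquiv_toLinearMap σ hfin
  have hroot : (minpoly L σ.toLinearMap).IsRoot ζ := by
    rw [hmin]
    simp [Polynomial.IsRoot, hζ1]
  -- get an eigenvector `v` with eigenvalue `ζ`
  have hint : IsIntegral L σ.toLinearMap := by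
    refine ⟨Polynomial.X ^ p - Polynomial.C 1, Polynomial.monic_X_pow_sub_C 1 hppos.ne', ?_⟩
    rw [← hmin]
    exact minpoly.aeval L σ.toLinearMap
  obtain ⟨v, hv0, hveq⟩ := aux_exists_eigenvector hint hroot
  have hσv : σ v = (algebraMap L F ζ) * v := by
    simpa [Algebra.smul_def] using hveq
  -- take a `p`-th root `b` of `v`
  obtain ⟨b, hb⟩ := IsAlgClosed.exists_pow_nat_eq v hppos
  have hb0 : b ≠ 0 := by
    intro h
    apply hv0
    rw [← hb, h, zero_pow hppos.ne']
  -- `c := σ b / b` satisfies `c ^ p = ζ`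
  set c := σ b * b⁻¹ with hc
  have hcb : σ b = c * b := by
    rw [hc, mul_assoc, inv_mul_cancel₀ hb0, mul_one]
  have hcp : c ^ p = algebraMap L F ζ := by
    have h1 : (σ b) ^ p = (algebraMap L F ζ) * v := by
      rw [← map_pow, hb, hσv]
    have : c ^ p = (σ b) ^ p * (b ^ p)⁻¹ := by
      rw [hc, mul_pow, inv_pow]
    rw [this, h1, hb]
    field_simp
  -- `c` is a `p²`-th root of unity, hence comes from `L` and is fixed by `σ`
  have hcp2 : c ^ (p ^ 2) = 1 := by
    rw [pow_two, pow_mul, hcp, ← map_pow, hζ1, map_one]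
  obtain ⟨η, hη1, hη2⟩ := hroots (p ^ 2) (pow_pos hppos 2)
  have hηprim : IsPrimitiveRoot η (p ^ 2) := IsPrimitiveRoot.mk_of_lt η (pow_pos hppos 2) hη1 hη2
  have hηFprim : IsPrimitiveRoot (algebraMap L F η) (p ^ 2) :=
    hηprim.map_of_injective (algebraMap L F).injective
  haveI : NeZero (p ^ 2) := ⟨(pow_pos hppos 2).ne'⟩
  obtain ⟨i, _, hi⟩ := hηFprim.eq_pow_of_pow_eq_one hcp2
  have hσc : σ c = c := by
    rw [← hi, ← map_pow, σ.commutes]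
  -- `σ ^ k b = c ^ k * b` for all `k`
  have hk : ∀ k : ℕ, (σ ^ k) b = c ^ k * b := by
    intro k
    induction k with
    | zero => simp
    | succ k ih =>
      rw [pow_succ', AlgEquiv.mul_apply, ih, map_mul, map_pow, hσc, hcb, pow_succ]
      ring
  -- conclude `ζ = 1`, a contradiction
  have := hk p
  rw [hp, pow_orderOf_eq_one, hcp] at this
  have hζF : algebraMap L F ζ = 1 := by
    have hb' : (1 : F) * b = algebraMap L F ζ * b := by
      rw [one_mul]
      exact this
    exact (mul_right_cancel₀ hb0 hb'.symm)
  exact hζne ((algebraMap L F).injective (by rw [hζF, map_one]))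
end

section
/- Let C be a field equipped with a nonarchimedean (ultrametric) multiplicative norm extending the p-adic absolute value on ℚ_p, and assume C is complete. For z ∈ C with ‖z‖ < 1, one has log(1+z) = 0 if and only if 1+z is a p-power root of unity, i.e. (1+z)^{p^r} = 1 for some integer r ≥ 0. In particular, for every p-power root of unity ζ ∈ C one has ‖ζ − 1‖ < 1 and log(ζ) = 0. -/
/-- `log1p z` is the sum of the series `Σ_{n ≥ 1} (-1)^(n-1) z^n / n`, i.e. `log (1 + z)`. -/
noncomputable def log1p {C : Type*} [NormedField C] (z : C) : C :=
  ∑' n : ℕ, (-1) ^ n * z ^ (n + 1) / ((n : C) + 1)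

set_option linter.unusedSectionVars false

open Filter Finset Topology IsUltrametricDist

namespace PadicLogKernel

variable {p : ℕ} [hp : Fact p.Prime] {C : Type*} [NormedField C] [CompleteSpace C]
  [IsUltrametricDist C] [Algebra ℚ_[p] C]

section

variable (hext : ∀ x : ℚ_[p], ‖algebraMap ℚ_[p] C x‖ = ‖x‖)
include hext

lemma norm_natCast (n : ℕ) : ‖(n : C)‖ = ‖(n : ℚ_[p])‖ := by
  rw [← map_natCast (algebraMap ℚ_[p] C) n, hext]

lemma norm_natCast_le_one (n : ℕ) : ‖(n : C)‖ ≤ 1 := by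
  rw [norm_natCast hext]
  have h : ((n : ℤ) : ℚ_[p]) = (n : ℚ_[p]) := by push_cast; ring
  rw [← h]
  exact Padic.norm_int_le_one _

lemma norm_p_C : ‖((p : ℕ) : C)‖ = (p : ℝ)⁻¹ := by
  rw [norm_natCast hext]
  exact Padic.norm_p

lemma norm_natCast_inv_eq (n : ℕ) (hn : n ≠ 0) :
    ‖(n : C)‖⁻¹ = ((p ^ padicValNat p n : ℕ) : ℝ) := by
  rw [norm_natCast hext, Padic.norm_eq_zpow_neg_valuation (by exact_mod_cast hn),
    Padic.valuation_natCast, ← zpow_neg, neg_neg]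
  push_cast
  simp [padicValRat.of_nat]

lemma norm_natCast_inv_le_self (n : ℕ) (hn : n ≠ 0) : ‖(n : C)‖⁻¹ ≤ (n : ℝ) := by
  rw [norm_natCast_inv_eq hext n hn]
  exact_mod_cast Nat.le_of_dvd (Nat.pos_of_ne_zero hn) pow_padicValNat_dvd

lemma norm_natCast_inv_le_pow (m : ℕ) : ‖((m + 1 : ℕ) : C)‖⁻¹ ≤ (p : ℝ) ^ m := by
  rw [norm_natCast_inv_eq hext (m + 1) (Nat.succ_ne_zero m)]
  have h1 : p ^ padicValNat p (m + 1) ≤ m + 1 :=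
    Nat.le_of_dvd (Nat.succ_pos m) pow_padicValNat_dvd
  have h2 : m + 1 ≤ 2 ^ m := by have := Nat.lt_two_pow_self (n := m); omega
  have h3 : (2 : ℕ) ^ m ≤ p ^ m := Nat.pow_le_pow_left hp.out.two_le m
  exact_mod_cast le_trans (le_trans h1 h2) h3

lemma norm_choose_le {q k : ℕ} (h : p ∣ q.choose k) :
    ‖((q.choose k : ℕ) : C)‖ ≤ (p : ℝ)⁻¹ := by
  obtain ⟨m, hm⟩ := h
  rw [hm, Nat.cast_mul, norm_mul, norm_p_C hext]
  calc (p : ℝ)⁻¹ * ‖((m : ℕ) : C)‖ ≤ (p : ℝ)⁻¹ * 1 := by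
        gcongr
        exact norm_natCast_le_one hext m
    _ = (p : ℝ)⁻¹ := mul_one _

end

/-- Binomial expansion of `(1+z)^q - 1`. -/
lemma expand (z : C) (q : ℕ) :
    (1 + z) ^ q - 1 = ∑ n ∈ range q, z ^ (n + 1) * ((q.choose (n + 1) : ℕ) : C) := by
  have h := add_pow z 1 q
  rw [Finset.sum_range_succ'] at h
  simp only [one_pow, mul_one, pow_zero, Nat.choose_zero_right, Nat.cast_one, one_mul] at h
  rw [add_comm (1 : C) z, h, add_sub_cancel_right]

lemma summable_aux {x : ℝ} (hx0 : 0 ≤ x) (hx : x < 1) :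
    Summable (fun n : ℕ => ((n : ℝ) + 1) * x ^ (n + 1)) := by
  have h : ‖x‖ < 1 := by rwa [Real.norm_eq_abs, abs_of_nonneg hx0]
  have h1 := summable_pow_mul_geometric_of_norm_lt_one (R := ℝ) 1 h
  have h2 := (summable_nat_add_iff (f := fun n : ℕ => (n : ℝ) ^ 1 * x ^ n) 1).mpr h1
  refine h2.congr fun n => ?_
  push_cast
  ring

section
variable (hext : ∀ x : ℚ_[p], ‖algebraMap ℚ_[p] C x‖ = ‖x‖)
include hext

lemma norm_log1p_eq {w : C} (hw : ‖w‖ < (p : ℝ)⁻¹) : ‖log1p w‖ = ‖w‖ := by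
  rcases eq_or_ne w 0 with rfl | hw0
  · simp [log1p]
  have hp2 : (2 : ℝ) ≤ p := by exact_mod_cast hp.out.two_le
  have hppos : (0 : ℝ) < p := by linarith
  have hw1 : ‖w‖ < 1 := hw.trans_le (by rw [inv_le_one_iff₀]; right; linarith)
  have hwpos : 0 < ‖w‖ := norm_pos_iff.mpr hw0
  have hpw : (p : ℝ) * ‖w‖ < 1 := by
    calc (p : ℝ) * ‖w‖ < (p : ℝ) * (p : ℝ)⁻¹ := by gcongr
      _ = 1 := mul_inv_cancel₀ (ne_of_gt hppos)
  set g : ℕ → C := fun n => (-1) ^ n * w ^ (n + 1) / ((n : C) + 1) with hg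
  have hgnorm : ∀ n, ‖g n‖ = ‖w‖ ^ (n + 1) * ‖((n + 1 : ℕ) : C)‖⁻¹ := by
    intro n
    have e : ((n : C) + 1) = ((n + 1 : ℕ) : C) := by push_cast; ring
    simp only [hg, e, norm_div, norm_mul, norm_pow, norm_neg, norm_one, one_pow, one_mul,
      div_eq_mul_inv, norm_inv]
  have hsum : Summable g := by
    apply Summable.of_norm_bounded (PadicLogKernel.summable_aux (norm_nonneg w) hw1)
    intro n
    rw [hgnorm n, mul_comm]
    gcongr
    have := norm_natCast_inv_le_self hext (n + 1) (Nat.succ_ne_zero n)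
    push_cast at this ⊢
    linarith
  have hsplit : log1p w = w + ∑' n, g (n + 1) := by
    rw [log1p, hsum.tsum_eq_zero_add]
    congr 1
    simp [hg]
  have htail : ‖∑' n, g (n + 1)‖ ≤ ‖w‖ * ((p : ℝ) * ‖w‖) := by
    apply norm_tsum_le_of_forall_le_of_nonneg (by positivity)
    intro n
    have h1 : ‖g (n + 1)‖ = ‖w‖ ^ (n + 2) * ‖((n + 2 : ℕ) : C)‖⁻¹ := hgnorm (n + 1)
    have h2 : ‖((n + 2 : ℕ) : C)‖⁻¹ ≤ (p : ℝ) ^ (n + 1) := norm_natCast_inv_le_pow hext (n + 1)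
    calc ‖g (n + 1)‖ ≤ ‖w‖ ^ (n + 2) * (p : ℝ) ^ (n + 1) := by
          rw [h1]; gcongr
      _ = ‖w‖ * ((p : ℝ) * ‖w‖) ^ (n + 1) := by ring
      _ ≤ ‖w‖ * ((p : ℝ) * ‖w‖) ^ 1 :=
          mul_le_mul_of_nonneg_left
            (pow_le_pow_of_le_one (by positivity) hpw.le (by omega)) (norm_nonneg w)
      _ = ‖w‖ * ((p : ℝ) * ‖w‖) := by ring
  have hlt : ‖∑' n, g (n + 1)‖ < ‖w‖ := htail.trans_lt (by nlinarith)
  rw [hsplit, norm_add_eq_max_of_norm_ne_norm hlt.ne', max_eq_left hlt.le]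

lemma tendsto_ratio {z : C} (hz : ‖z‖ < 1) :
    Tendsto (fun r : ℕ => ((1 + z) ^ p ^ r - 1) / ((p ^ r : ℕ) : C)) atTop (𝓝 (log1p z)) := by
  haveI : CharZero C := charZero_of_injective_algebraMap (algebraMap ℚ_[p] C).injective
  set f : ℕ → ℕ → C :=
    fun r n => (((p ^ r - 1).choose n : ℕ) : C) / ((n : C) + 1) * z ^ (n + 1) with hf
  have hq : ∀ r : ℕ, 1 ≤ p ^ r := fun r => Nat.one_le_pow _ _ hp.out.pos
  -- Claim A : the ratio is the tsum of `f r`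
  have hA : ∀ r : ℕ, ((1 + z) ^ p ^ r - 1) / ((p ^ r : ℕ) : C) = ∑' n, f r n := by
    intro r
    have hsupp : ∀ n ∉ range (p ^ r), f r n = 0 := by
      intro n hn
      rw [mem_range, not_lt] at hn
      have hc : (p ^ r - 1).choose n = 0 := Nat.choose_eq_zero_of_lt (by have := hq r; omega)
      simp [hf, hc]
    rw [tsum_eq_sum hsupp, PadicLogKernel.expand z (p ^ r), Finset.sum_div]
    apply Finset.sum_congr rfl
    intro n _
    have h1 : ((n : C) + 1) ≠ 0 := by
      have : ((n : C) + 1) = ((n + 1 : ℕ) : C) := by push_cast; ring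
      rw [this]
      exact Nat.cast_ne_zero.mpr (Nat.succ_ne_zero n)
    have h2 : ((p ^ r : ℕ) : C) ≠ 0 := Nat.cast_ne_zero.mpr (pow_ne_zero _ hp.out.pos.ne')
    have hid : ((p ^ r : ℕ) : C) * (((p ^ r - 1).choose n : ℕ) : C)
        = (((p ^ r).choose (n + 1) : ℕ) : C) * ((n : C) + 1) := by
      have hnat := Nat.add_one_mul_choose_eq (p ^ r - 1) n
      have e : p ^ r - 1 + 1 = p ^ r := Nat.succ_pred_eq_of_pos (hq r)
      simp only [Nat.succ_eq_add_one, e] at hnat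
      exact_mod_cast hnat
    have hfrn : f r n = z ^ (n + 1) * (((p ^ r).choose (n + 1) : ℕ) : C) / ((p ^ r : ℕ) : C) := by
      simp only [hf]
      rw [div_mul_eq_mul_div, div_eq_div_iff h1 h2]
      linear_combination z ^ (n + 1) * hid
    exact hfrn.symm
  -- Claim B : uniform bound
  have hB : ∀ r n, ‖f r n‖ ≤ ((n : ℝ) + 1) * ‖z‖ ^ (n + 1) := by
    intro r n
    have e : ((n : C) + 1) = ((n + 1 : ℕ) : C) := by push_cast; ring
    have hb1 : ‖(((p ^ r - 1).choose n : ℕ) : C)‖ ≤ 1 := norm_natCast_le_one hext _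
    have hb2 : ‖((n + 1 : ℕ) : C)‖⁻¹ ≤ ((n : ℝ) + 1) := by
      have := norm_natCast_inv_le_self hext (n + 1) (Nat.succ_ne_zero n)
      push_cast at this ⊢
      linarith
    calc ‖f r n‖ = ‖(((p ^ r - 1).choose n : ℕ) : C)‖ * ‖((n + 1 : ℕ) : C)‖⁻¹ * ‖z‖ ^ (n + 1) := by
          rw [hf]
          simp only [e, norm_mul, norm_div, norm_pow, div_eq_mul_inv, norm_inv]
      _ ≤ 1 * ((n : ℝ) + 1) * ‖z‖ ^ (n + 1) := by gcongr
      _ = ((n : ℝ) + 1) * ‖z‖ ^ (n + 1) := by ring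
  -- p ^ r tends to zero in C
  have hptend : Tendsto (fun r : ℕ => ((p ^ r : ℕ) : C)) atTop (𝓝 0) := by
    rw [tendsto_zero_iff_norm_tendsto_zero]
    have he : ∀ r : ℕ, ‖((p ^ r : ℕ) : C)‖ = ((p : ℝ)⁻¹) ^ r := by
      intro r
      rw [Nat.cast_pow, norm_pow, norm_p_C hext, inv_pow]
    simp only [he]
    apply tendsto_pow_atTop_nhds_zero_of_lt_one (by positivity)
    rw [inv_lt_one_iff₀]
    right
    exact_mod_cast hp.out.one_lt
  -- Claim C : termwise limits
  have hC : ∀ n : ℕ, Tendsto (fun r => f r n) atTop (𝓝 ((-1) ^ n * z ^ (n + 1) / ((n : C) + 1))) := by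
    intro n
    have hfac : ((n.factorial : ℕ) : C) ≠ 0 := Nat.cast_ne_zero.mpr n.factorial_ne_zero
    have hchoose : Tendsto (fun r : ℕ => (((p ^ r - 1).choose n : ℕ) : C)) atTop (𝓝 ((-1) ^ n)) := by
      have hev : ∀ᶠ r in atTop, (((p ^ r - 1).choose n : ℕ) : C)
          = (∏ i ∈ range n, (((p ^ r : ℕ) : C) - 1 - (i : C))) / ((n.factorial : ℕ) : C) := by
        filter_upwards [eventually_ge_atTop n] with r hr
        have hrn : n + 1 ≤ p ^ r := by
          calc n + 1 ≤ r + 1 := by omega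
            _ ≤ 2 ^ r := by have := Nat.lt_two_pow_self (n := r); omega
            _ ≤ p ^ r := Nat.pow_le_pow_left hp.out.two_le r
        have hd : (((p ^ r - 1).descFactorial n : ℕ) : C)
            = ∏ i ∈ range n, (((p ^ r : ℕ) : C) - 1 - (i : C)) := by
          rw [Nat.descFactorial_eq_prod_range, Nat.cast_prod]
          apply Finset.prod_congr rfl
          intro i hi
          rw [mem_range] at hi
          have hi1 : i ≤ p ^ r - 1 := by omega
          rw [Nat.cast_sub hi1, Nat.cast_sub (hq r)]
          push_cast
          ring
        rw [eq_div_iff hfac, ← hd, ← Nat.cast_mul, mul_comm, ← Nat.descFactorial_eq_factorial_mul_choose]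
      have hprod : Tendsto (fun r : ℕ => ∏ i ∈ range n, (((p ^ r : ℕ) : C) - 1 - (i : C))) atTop
          (𝓝 (∏ i ∈ range n, ((0 : C) - 1 - (i : C)))) :=
        tendsto_finset_prod _ (fun i _ => (hptend.sub_const 1).sub_const (i : C))
      have hval : (∏ i ∈ range n, ((0 : C) - 1 - (i : C))) = (-1) ^ n * ((n.factorial : ℕ) : C) := by
        have e1 : ∀ i ∈ range n, ((0 : C) - 1 - (i : C)) = (-1) * ((i : C) + 1) :=
          fun i _ => by ring
        rw [Finset.prod_congr rfl e1, Finset.prod_mul_distrib, Finset.prod_const,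
          Finset.card_range]
        congr 1
        rw [← Finset.prod_range_add_one_eq_factorial, Nat.cast_prod]
        exact Finset.prod_congr rfl fun i _ => by push_cast; ring
      have h2 := hprod.div_const ((n.factorial : ℕ) : C)
      rw [hval, mul_div_assoc, div_self hfac, mul_one] at h2
      exact h2.congr' (hev.mono fun r hr => hr.symm)
    have h3 := (hchoose.div_const ((n : C) + 1)).mul_const (z ^ (n + 1))
    have h4 : (-1 : C) ^ n / ((n : C) + 1) * z ^ (n + 1) = (-1) ^ n * z ^ (n + 1) / ((n : C) + 1) := by
      ring
    rw [h4] at h3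
    exact h3.congr fun r => by rw [hf]
  -- bound is summable
  have hbound : Summable (fun n : ℕ => ((n : ℝ) + 1) * ‖z‖ ^ (n + 1)) :=
    PadicLogKernel.summable_aux (norm_nonneg z) hz
  have main := tendsto_tsum_of_dominated_convergence hbound hC
    (Eventually.of_forall fun r n => hB r n)
  have : (∑' n : ℕ, (-1 : C) ^ n * z ^ (n + 1) / ((n : C) + 1)) = log1p z := rfl
  rw [this] at main
  exact main.congr fun r => (hA r).symm

lemma step_bound {w : C} (hw : ‖w‖ ≤ 1) :
    ‖(1 + w) ^ p - 1‖ ≤ ‖w‖ * max (‖w‖ ^ (p - 1)) (p : ℝ)⁻¹ := by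
  rw [PadicLogKernel.expand w p]
  apply norm_sum_le_of_forall_le_of_nonneg (by positivity)
  intro n hn
  rw [mem_range] at hn
  have hw1 : ∀ k : ℕ, 1 ≤ k → ‖w‖ ^ k ≤ ‖w‖ := fun k hk =>
    pow_le_pow_of_le_one (norm_nonneg w) hw hk |>.trans_eq (pow_one ‖w‖)
  rcases eq_or_lt_of_le (Nat.succ_le_of_lt hn) with he | hlt
  · -- n + 1 = p
    have he' : n + 1 = p := by omega
    have hc : p.choose (n + 1) = 1 := by rw [← he']; exact Nat.choose_self _
    have hn1 : n = p - 1 := by omega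
    calc ‖w ^ (n + 1) * ((p.choose (n + 1) : ℕ) : C)‖ = ‖w‖ ^ (n + 1) := by
          rw [hc]; simp
      _ = ‖w‖ * ‖w‖ ^ (p - 1) := by rw [hn1, ← pow_succ']
      _ ≤ ‖w‖ * max (‖w‖ ^ (p - 1)) (p : ℝ)⁻¹ :=
          mul_le_mul_of_nonneg_left (le_max_left _ _) (norm_nonneg w)
  · -- n + 1 < p
    have hdvd : p ∣ p.choose (n + 1) := hp.out.dvd_choose_self (Nat.succ_ne_zero n) hlt
    calc ‖w ^ (n + 1) * ((p.choose (n + 1) : ℕ) : C)‖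
        = ‖w‖ ^ (n + 1) * ‖((p.choose (n + 1) : ℕ) : C)‖ := by rw [norm_mul, norm_pow]
      _ ≤ ‖w‖ * (p : ℝ)⁻¹ := by
          apply mul_le_mul (hw1 (n + 1) (by omega)) (norm_choose_le hext hdvd) (norm_nonneg _)
            (norm_nonneg w)
      _ ≤ ‖w‖ * max (‖w‖ ^ (p - 1)) (p : ℝ)⁻¹ :=
          mul_le_mul_of_nonneg_left (le_max_right _ _) (norm_nonneg w)

lemma exists_small {z : C} (hz : ‖z‖ < 1) :
    ∃ N : ℕ, ‖(1 + z) ^ p ^ N - 1‖ < (p : ℝ)⁻¹ := by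
  have hp2 : (2 : ℝ) ≤ p := by exact_mod_cast hp.out.two_le
  have hppos : (0 : ℝ) < p := by linarith
  set q : ℝ := max (‖z‖ ^ (p - 1)) (p : ℝ)⁻¹ with hqdef
  have hq0 : 0 ≤ q := le_trans (by positivity) (le_max_right _ _)
  have hq1 : q < 1 := by
    apply max_lt
    · exact pow_lt_one₀ (norm_nonneg z) hz (by have := hp.out.two_le; omega)
    · rw [inv_lt_one_iff₀]; right; linarith
  have key : ∀ r : ℕ, ‖(1 + z) ^ p ^ r - 1‖ ≤ ‖z‖ * q ^ r := by
    intro r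
    induction r with
    | zero => simp
    | succ r ih =>
      have hqr1 : q ^ r ≤ 1 := pow_le_one₀ hq0 hq1.le
      have hwz : ‖(1 + z) ^ p ^ r - 1‖ ≤ ‖z‖ := ih.trans (by nlinarith [norm_nonneg z])
      have hwle1 : ‖(1 + z) ^ p ^ r - 1‖ ≤ 1 := hwz.trans hz.le
      have hpow : (1 + z) ^ p ^ (r + 1) = (1 + ((1 + z) ^ p ^ r - 1)) ^ p := by
        rw [add_sub_cancel, ← pow_mul, pow_succ]
      rw [hpow]
      calc ‖(1 + ((1 + z) ^ p ^ r - 1)) ^ p - 1‖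
          ≤ ‖(1 + z) ^ p ^ r - 1‖ * max (‖(1 + z) ^ p ^ r - 1‖ ^ (p - 1)) (p : ℝ)⁻¹ :=
            step_bound hext hwle1
        _ ≤ (‖z‖ * q ^ r) * q := by
            apply mul_le_mul ih
            · apply max_le
              · exact le_trans (pow_le_pow_left₀ (norm_nonneg _) hwz (p - 1)) (le_max_left _ _)
              · exact le_max_right _ _
            · positivity
            · positivity
        _ = ‖z‖ * q ^ (r + 1) := by ring
  have htends : Tendsto (fun r : ℕ => ‖z‖ * q ^ r) atTop (𝓝 0) := by
    simpa using (tendsto_pow_atTop_nhds_zero_of_lt_one hq0 hq1).const_mul ‖z‖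
  have hev := htends.eventually_lt_const (by positivity : (0 : ℝ) < (p : ℝ)⁻¹)
  obtain ⟨N, hN⟩ := hev.exists
  exact ⟨N, lt_of_le_of_lt (key N) hN⟩

lemma root_norm_lt {ζ : C} {r : ℕ} (h : ζ ^ p ^ r = 1) : ‖ζ - 1‖ < 1 := by
  have hp2 : (2 : ℝ) ≤ p := by exact_mod_cast hp.out.two_le
  have h' : ζ ^ p ^ (r + 1) = 1 := by rw [pow_succ, pow_mul, h, one_pow]
  obtain ⟨m, hm⟩ : ∃ m, p ^ (r + 1) = m + 1 :=
    ⟨p ^ (r + 1) - 1, by have := Nat.one_le_pow (r + 1) p hp.out.pos; omega⟩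
  have hm1 : 1 ≤ m := by
    have h2 : 2 ≤ p ^ (r + 1) := le_trans hp.out.two_le (Nat.le_self_pow (Nat.succ_ne_zero r) p)
    omega
  set z : C := ζ - 1 with hzdef
  have hζ : (1 : C) + z = ζ := by rw [hzdef]; ring
  have hexp : (0 : C) = ∑ n ∈ range (m + 1), z ^ (n + 1) * (((m + 1).choose (n + 1) : ℕ) : C) := by
    rw [← PadicLogKernel.expand z (m + 1), hζ, ← hm, h', sub_self]
  rw [Finset.sum_range_succ, Nat.choose_self, Nat.cast_one, mul_one] at hexp
  have hsplit : z ^ (m + 1) =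
      -∑ n ∈ range m, z ^ (n + 1) * (((m + 1).choose (n + 1) : ℕ) : C) := by
    have h0 : z ^ (m + 1) + ∑ n ∈ range m, z ^ (n + 1) * (((m + 1).choose (n + 1) : ℕ) : C)
        = 0 := by rw [add_comm]; exact hexp.symm
    exact eq_neg_of_add_eq_zero_left h0
  have hle1 : ‖z‖ ≤ 1 := by
    by_contra hgt
    push_neg at hgt
    have hb : ‖z ^ (m + 1)‖ ≤ ‖z‖ ^ m := by
      rw [hsplit, norm_neg]
      apply norm_sum_le_of_forall_le_of_nonneg (by positivity)
      intro n hn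
      rw [mem_range] at hn
      calc ‖z ^ (n + 1) * (((m + 1).choose (n + 1) : ℕ) : C)‖
          = ‖z‖ ^ (n + 1) * ‖(((m + 1).choose (n + 1) : ℕ) : C)‖ := by rw [norm_mul, norm_pow]
        _ ≤ ‖z‖ ^ (n + 1) * 1 := by
            gcongr
            exact norm_natCast_le_one hext _
        _ = ‖z‖ ^ (n + 1) := mul_one _
        _ ≤ ‖z‖ ^ m := pow_le_pow_right₀ hgt.le (by omega)
    rw [norm_pow] at hb
    have hlt : ‖z‖ ^ m < ‖z‖ ^ (m + 1) := pow_lt_pow_right₀ hgt (by omega)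
    linarith
  have hb2 : ‖z‖ ^ (m + 1) ≤ (p : ℝ)⁻¹ := by
    rw [← norm_pow, hsplit, norm_neg]
    apply norm_sum_le_of_forall_le_of_nonneg (by positivity)
    intro n hn
    rw [mem_range] at hn
    have hdvd : p ∣ (m + 1).choose (n + 1) := by
      have hd := Nat.Prime.dvd_choose_pow (p := p) (n := r + 1) (k := n + 1) hp.out
        (Nat.succ_ne_zero n) (by omega)
      rwa [hm] at hd
    calc ‖z ^ (n + 1) * (((m + 1).choose (n + 1) : ℕ) : C)‖
        = ‖z‖ ^ (n + 1) * ‖(((m + 1).choose (n + 1) : ℕ) : C)‖ := by rw [norm_mul, norm_pow]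
      _ ≤ 1 * (p : ℝ)⁻¹ := by
          apply mul_le_mul (pow_le_one₀ (norm_nonneg z) hle1) (norm_choose_le hext hdvd)
            (norm_nonneg _) zero_le_one
      _ = (p : ℝ)⁻¹ := one_mul _
  have hfin : ‖z‖ ^ (m + 1) < 1 := lt_of_le_of_lt hb2 (by rw [inv_lt_one_iff₀]; right; linarith)
  exact (pow_lt_one_iff_of_nonneg (norm_nonneg z) (Nat.succ_ne_zero m)).mp hfin

end

end PadicLogKernel

/-- **The kernel of the `p`-adic logarithm.** Let `C` be a complete field with a
nonarchimedean multiplicative norm extending the `p`-adic absolute value on `ℚ_p`.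
For `‖z‖ < 1`, one has `log (1+z) = 0` iff `1 + z` is a `p`-power root of unity.
In particular, every `p`-power root of unity `ζ ∈ C` satisfies `‖ζ - 1‖ < 1` and
`log ζ = 0`. -/
theorem padic_log_eq_zero_iff_pow_prime_root_of_unity (p : ℕ) [Fact p.Prime]
    (C : Type*) [NormedField C] [CompleteSpace C] [IsUltrametricDist C]
    [Algebra ℚ_[p] C] (hext : ∀ x : ℚ_[p], ‖algebraMap ℚ_[p] C x‖ = ‖x‖) :
    (∀ z : C, ‖z‖ < 1 →
      (log1p z = 0 ↔ ∃ r : ℕ, (1 + z) ^ p ^ r = 1)) ∧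
    (∀ ζ : C, (∃ r : ℕ, ζ ^ p ^ r = 1) → ‖ζ - 1‖ < 1 ∧ log1p (ζ - 1) = 0) := by
  have hpp : p.Prime := Fact.out
  haveI : CharZero C := charZero_of_injective_algebraMap (algebraMap ℚ_[p] C).injective
  have hp2 : (2 : ℝ) ≤ p := by exact_mod_cast hpp.two_le
  have hroot : ∀ ζ : C, (∃ r : ℕ, ζ ^ p ^ r = 1) → ‖ζ - 1‖ < 1 ∧ log1p (ζ - 1) = 0 := by
    rintro ζ ⟨r, hr⟩
    have hnorm : ‖ζ - 1‖ < 1 := PadicLogKernel.root_norm_lt hext hr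
    refine ⟨hnorm, ?_⟩
    have hζ : (1 : C) + (ζ - 1) = ζ := by ring
    have L := PadicLogKernel.tendsto_ratio hext hnorm
    rw [hζ] at L
    have hev : ∀ᶠ s in Filter.atTop, (0 : C) = (ζ ^ p ^ s - 1) / ((p ^ s : ℕ) : C) := by
      filter_upwards [Filter.eventually_ge_atTop r] with s hs
      have h1 : ζ ^ p ^ s = 1 := by
        have h2 : p ^ s = p ^ r * p ^ (s - r) := by rw [← pow_add]; congr 1; omega
        rw [h2, pow_mul, hr, one_pow]
      rw [h1, sub_self, zero_div]
    exact (tendsto_nhds_unique L (Filter.Tendsto.congr' hev tendsto_const_nhds)).symm ▸ rfl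
  refine ⟨?_, hroot⟩
  intro z hz
  constructor
  · intro hlog
    obtain ⟨N, hN⟩ := PadicLogKernel.exists_small hext hz
    set w : C := (1 + z) ^ p ^ N - 1 with hw
    have hw1 : ‖w‖ < 1 := lt_of_lt_of_le hN (by rw [inv_le_one_iff₀]; right; linarith)
    have h1w : (1 : C) + w = (1 + z) ^ p ^ N := by rw [hw]; ring
    have hWpow : ∀ s : ℕ, (1 + w) ^ p ^ s = (1 + z) ^ p ^ (N + s) := by
      intro s
      rw [h1w, ← pow_mul, ← pow_add]
    have hpN : ((p ^ N : ℕ) : C) ≠ 0 := Nat.cast_ne_zero.mpr (pow_ne_zero _ hpp.pos.ne')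
    have L := PadicLogKernel.tendsto_ratio hext hz
    rw [hlog] at L
    have Lw := PadicLogKernel.tendsto_ratio hext hw1
    have hshift : Filter.Tendsto
        (fun s : ℕ => ((1 + z) ^ p ^ (N + s) - 1) / ((p ^ (N + s) : ℕ) : C))
        Filter.atTop (nhds 0) := by
      have h3 := L.comp (tendsto_add_atTop_nat N)
      refine h3.congr fun s => ?_
      simp only [Function.comp]
      rw [Nat.add_comm s N]
    have heq : ∀ s : ℕ, ((1 + w) ^ p ^ s - 1) / ((p ^ s : ℕ) : C)
        = ((p ^ N : ℕ) : C) * (((1 + z) ^ p ^ (N + s) - 1) / ((p ^ (N + s) : ℕ) : C)) := by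
      intro s
      have hps : ((p ^ s : ℕ) : C) ≠ 0 := Nat.cast_ne_zero.mpr (pow_ne_zero _ hpp.pos.ne')
      rw [hWpow s, pow_add, Nat.cast_mul]
      field_simp
    have Lw0 : Filter.Tendsto (fun s : ℕ => ((1 + w) ^ p ^ s - 1) / ((p ^ s : ℕ) : C))
        Filter.atTop (nhds 0) := by
      have h4 := hshift.const_mul ((p ^ N : ℕ) : C)
      rw [mul_zero] at h4
      exact h4.congr fun s => (heq s).symm
    have hlogw : log1p w = 0 := tendsto_nhds_unique Lw Lw0
    have hnw : w = 0 := by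
      have h5 := PadicLogKernel.norm_log1p_eq hext hN
      rw [hlogw, norm_zero] at h5
      exact norm_eq_zero.mp h5.symm
    exact ⟨N, by rw [hw] at hnw; linear_combination hnw⟩
  · rintro ⟨r, hr⟩
    have h6 := hroot (1 + z) ⟨r, hr⟩
    simpa using h6.2
end
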